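/- Let p be prime and A, B ⊆ F_p with A+B ⊆ Z_d ∪ {0}, where Z_d is the subgroup of d-th roots of unity in F_p^× for some d properly dividing p-1. Then |A|·|B| ≤ d + |B ∩ (-A)|. -/

import Mathlib

open Pointwise Polynomial Finset

lemma lag_basis_coeff' {F : Type*} [Field F] [DecidableEq F] (A : Finset F) (a : F) (ha : a ∈ A) :
    (Lagrange.basis A id a).coeff (A.card - 1) = ∏ a' ∈ A.erase a, (a - a')⁻¹ := by
  have hinj : Set.InjOn (id : F → F) A := Set.injOn_id _
  rw [show Lagrange.basis A id a = ∏ j ∈ A.erase a, Lagrange.basisDivisor (id a) (id j) from rfl]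
  have hrw : ∀ j ∈ A.erase a, Lagrange.basisDivisor (id a) (id j)
      = C ((a - j)⁻¹) * (X - C j) := fun j hj => rfl
  rw [Finset.prod_congr rfl hrw, Finset.prod_mul_distrib, show (∏ x ∈ A.erase a, C (a - x)⁻¹) = C (∏ x ∈ A.erase a, (a - x)⁻¹) by rw [map_prod]]
  have hN : (∏ j ∈ A.erase a, (X - C j)).Monic := monic_prod_of_monic _ _ fun j _ => monic_X_sub_C j
  have hNdeg : (∏ j ∈ A.erase a, (X - C j)).natDegree = A.card - 1 := by
    rw [natDegree_prod _ _ fun j _ => X_sub_C_ne_zero j]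
    simp [Finset.card_erase_of_mem ha]
  rw [coeff_C_mul, ← hNdeg, hN.coeff_natDegree, mul_one]

lemma lag_moment' {F : Type*} [Field F] [DecidableEq F] (A : Finset F) (f : Polynomial F)
    (hf : f.degree < A.card) :
    ∑ a ∈ A, (∏ a' ∈ A.erase a, (a - a')⁻¹) * f.eval a = f.coeff (A.card - 1) := by
  have hinj : Set.InjOn (id : F → F) A := Set.injOn_id _
  have h := Lagrange.eq_interpolate (v := id) hinj hf
  conv_rhs => rw [h]
  rw [Lagrange.interpolate_apply, Polynomial.finset_sum_coeff]
  refine Finset.sum_congr rfl fun a ha => ?_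
  rw [coeff_C_mul, lag_basis_coeff' A a ha, mul_comm]; rfl

theorem hanson_petridis {p : ℕ} (hp : p.Prime) (d : ℕ) (hd : d ∣ p - 1) (hdp : d ≠ p - 1)
    (A B : Finset (ZMod p))
    (hAB : ∀ c ∈ A + B, c = 0 ∨ c ^ d = 1) :
    A.card * B.card ≤ d + (B ∩ (-A)).card := by
  haveI : Fact p.Prime := ⟨hp⟩
  classical
  rcases A.eq_empty_or_nonempty with rfl | hA
  · simp
  rcases B.eq_empty_or_nonempty with rfl | hB
  · simp
  set m := A.card with hm
  have hm1 : 1 ≤ m := Finset.card_pos.mpr hA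
  have hd1 : 1 ≤ d := by
    rcases Nat.eq_zero_or_pos d with rfl | h
    · exact absurd (Nat.eq_zero_of_zero_dvd hd).symm hdp
    · exact h
  have h2d : 2 * d ≤ p - 1 := by
    obtain ⟨t, ht⟩ := hd
    have hp2 : 2 ≤ p := hp.two_le
    have ht2 : 2 ≤ t := by
      rcases t with _ | _ | t
      · omega
      · omega
      · omega
    calc 2 * d = d * 2 := by ring
    _ ≤ d * t := Nat.mul_le_mul_left d ht2
    _ = p - 1 := ht.symm
  have hpow : ∀ a ∈ A, ∀ b ∈ B, a + b ≠ 0 → (a + b) ^ d = 1 := fun a ha b hb hne =>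
    (hAB _ (Finset.add_mem_add ha hb)).resolve_left hne
  -- m ≤ d + 1
  have hmd : m ≤ d + 1 := by
    obtain ⟨b₀, hb₀⟩ := hB
    set T : Finset (ZMod p) :=
      insert (0 : ZMod p) ((X ^ d - C 1 : (ZMod p)[X]).roots.toFinset) with hT
    have hne : (X ^ d - C 1 : (ZMod p)[X]) ≠ 0 := X_pow_sub_C_ne_zero hd1 1
    have hmap : ∀ a ∈ A, a + b₀ ∈ T := by
      intro a ha
      rcases hAB _ (Finset.add_mem_add ha hb₀) with h0 | h1
      · rw [h0]; exact Finset.mem_insert_self _ _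
      · refine Finset.mem_insert_of_mem ?_
        rw [Multiset.mem_toFinset, mem_roots hne]
        simp [IsRoot, h1]
    have hcard : T.card ≤ d + 1 := by
      refine (Finset.card_insert_le _ _).trans ?_
      have := Multiset.toFinset_card_le (X ^ d - C 1 : (ZMod p)[X]).roots
      have h2 := Polynomial.card_roots' (X ^ d - C 1 : (ZMod p)[X])
      rw [natDegree_X_pow_sub_C] at h2
      omega
    have := Finset.card_le_card_of_injOn (fun a => a + b₀) hmap
      (fun a _ a' _ h => by simpa using h)
    omega
  have hDp : d + (m - 1) < p := by omega
  set D := d + (m - 1) with hD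
  set c : ZMod p → ZMod p := fun a => ∏ a' ∈ A.erase a, (a - a')⁻¹ with hc
  set Q : Polynomial (ZMod p) := (∑ a ∈ A, C (c a) * (X + C a) ^ D) - 1 with hQ
  -- moments via eval
  have moment : ∀ f : Polynomial (ZMod p), f.degree < m →
      ∑ a ∈ A, c a * f.eval a = f.coeff (m - 1) := fun f hf => lag_moment' A f hf
  -- key evaluation
  have key : ∀ b ∈ B, ∀ i : ℕ, i + 1 ≤ m → (-b ∈ A → i + 2 ≤ m) →
      ∑ a ∈ A, c a * (b + a) ^ (D - i) = if i = 0 then 1 else 0 := by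
    intro b hb i hi hbA
    have hstep : ∀ a ∈ A, c a * (b + a) ^ (D - i)
        = c a * Polynomial.eval a ((X + C b) ^ (m - 1 - i)) := by
      intro a ha
      have heval : Polynomial.eval a ((X + C b) ^ (m - 1 - i)) = (b + a) ^ (m - 1 - i) := by
        rw [eval_pow, eval_add, eval_X, eval_C, add_comm]
      rw [heval]
      by_cases h0 : a + b = 0
      · have hab : b + a = 0 := by rw [add_comm]; exact h0
        have hmem : -b ∈ A := by rwa [show -b = a from neg_eq_of_add_eq_zero_left h0]
        have h2 : i + 2 ≤ m := hbA hmem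
        rw [hab, zero_pow (by omega), zero_pow (by omega)]
      · have h1 : (b + a) ^ d = 1 := by rw [add_comm]; exact hpow a ha b hb h0
        have : D - i = d + (m - 1 - i) := by omega
        rw [this, pow_add, h1, one_mul]
    rw [Finset.sum_congr rfl hstep]
    have hdeg : ((X + C b) ^ (m - 1 - i)).degree < (m : WithBot ℕ) := by
      have hnd : ((X + C b) ^ (m - 1 - i)).natDegree = m - 1 - i := by
        rw [natDegree_pow, natDegree_X_add_C, mul_one]
      calc ((X + C b) ^ (m - 1 - i)).degree ≤ ((X + C b) ^ (m - 1 - i)).natDegree :=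
            degree_le_natDegree
      _ < (m : WithBot ℕ) := by
            rw [hnd]
            exact_mod_cast (by omega : m - 1 - i < m)
    rw [moment _ hdeg]
    rcases Nat.eq_zero_or_pos i with rfl | hipos
    · rw [if_pos rfl, Nat.sub_zero]
      have h1 := ((monic_X_add_C b).pow (m - 1)).coeff_natDegree
      rwa [natDegree_pow, natDegree_X_add_C, mul_one] at h1
    · rw [if_neg (by omega)]
      refine Polynomial.coeff_eq_zero_of_natDegree_lt ?_
      rw [natDegree_pow, natDegree_X_add_C, mul_one]
      omega
  
  set rB : ZMod p → ℕ := fun b => if -b ∈ A then m - 1 else m with hrB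
  have hrBm : ∀ b, rB b ≤ m := by
    intro b; by_cases hbb : -b ∈ A <;> simp [hrB, hbb] <;> omega
  have hdvd : ∀ b ∈ B, (X - C b) ^ (rB b) ∣ Q := by
    intro b hb
    rcases Nat.eq_zero_or_pos (rB b) with h0 | hpos
    · rw [h0, pow_zero]; exact one_dvd _
    set G : ℕ → ZMod p :=
      fun i => (∑ a ∈ A, c a * (b + a) ^ (D - i)) * (D.choose i : ZMod p) with hG
    have h1 : ∀ a : ZMod p, (X + C a : (ZMod p)[X]) ^ D
        = ∑ i ∈ Finset.range (D + 1),
            C ((b + a) ^ (D - i) * (D.choose i : ZMod p)) * (X - C b) ^ i := by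
      intro a
      have h2 : (X + C a : (ZMod p)[X]) = (X - C b) + C (b + a) := by
        rw [C_add]; ring
      rw [h2, add_pow]
      refine Finset.sum_congr rfl fun i hi => ?_
      rw [map_mul, C_pow, ← C_eq_natCast]
      ring
    have hQb : Q = (∑ i ∈ Finset.range (D + 1), C (G i) * (X - C b) ^ i) - 1 := by
      rw [hQ]
      congr 1
      have h3 : ∀ a ∈ A, C (c a) * (X + C a) ^ D
          = ∑ i ∈ Finset.range (D + 1),
              C (c a * ((b + a) ^ (D - i) * (D.choose i : ZMod p))) * (X - C b) ^ i := by
        intro a _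
        rw [h1 a, Finset.mul_sum]
        exact Finset.sum_congr rfl fun i _ => by simp only [map_mul]; ring
      rw [Finset.sum_congr rfl h3, Finset.sum_comm]
      refine Finset.sum_congr rfl fun i _ => ?_
      rw [← Finset.sum_mul, ← map_sum]
      congr 2
      rw [hG]
      have hsc : ∑ x ∈ A, c x * ((b + x) ^ (D - i) * (D.choose i : ZMod p))
          = (∑ a ∈ A, c a * (b + a) ^ (D - i)) * (D.choose i : ZMod p) := by
        rw [Finset.sum_mul]
        exact Finset.sum_congr rfl fun a _ => by ring
      exact hsc
    have hkey0 := key b hb 0 (by omega) (fun hmem => by simp [hrB, hmem] at hpos; omega)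
    rw [if_pos rfl] at hkey0
    have hG0 : G 0 = 1 := by
      have hb0 : G 0 = (∑ a ∈ A, c a * (b + a) ^ (D - 0)) * (D.choose 0 : ZMod p) := rfl
      rw [hb0, hkey0, Nat.choose_zero_right, Nat.cast_one, one_mul]
    have hins : Finset.range (D + 1) = insert 0 (Finset.Ico 1 (D + 1)) := by
      ext x
      simp only [Finset.mem_range, Finset.mem_insert, Finset.mem_Ico]
      omega
    have hsplit : Q = ∑ i ∈ Finset.Ico 1 (D + 1), C (G i) * (X - C b) ^ i := by
      rw [hQb, hins, Finset.sum_insert (by simp)]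
      rw [hG0, pow_zero, mul_one, map_one]
      abel
    rw [hsplit]
    refine Finset.dvd_sum fun i hi => ?_
    rcases lt_or_ge i (rB b) with hlt | hge
    · have hi1 : 1 ≤ i := (Finset.mem_Ico.mp hi).1
      have hcond2 : -b ∈ A → i + 2 ≤ m := by
        intro hmem
        have : rB b = m - 1 := by simp [hrB, hmem]
        omega
      have hkey := key b hb i (by have := hrBm b; omega) hcond2
      rw [if_neg (by omega)] at hkey
      have hGi : G i = 0 := by
        have hbi : G i = (∑ a ∈ A, c a * (b + a) ^ (D - i)) * (D.choose i : ZMod p) := rfl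
        rw [hbi, hkey, zero_mul]
      rw [hGi, map_zero, zero_mul]
      exact dvd_zero _
    · exact dvd_trans (pow_dvd_pow _ hge) (dvd_mul_left _ _)
  have hcoeff : ∀ i : ℕ, d < i → Q.coeff i = 0 := by
    intro i hi
    rw [hQ, coeff_sub, Polynomial.finset_sum_coeff]
    have h1 : ∀ a ∈ A, (C (c a) * (X + C a) ^ D).coeff i
        = c a * (a ^ (D - i) * (D.choose i : ZMod p)) := by
      intro a _
      rw [coeff_C_mul, coeff_X_add_C_pow]
    rw [Finset.sum_congr rfl h1, coeff_one, if_neg (by omega), sub_zero]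
    rcases le_or_gt i D with hiD | hiD
    · have hm2 : 2 ≤ m := by omega
      have h2 : ∀ a ∈ A, c a * (a ^ (D - i) * (D.choose i : ZMod p))
          = (c a * Polynomial.eval a (X ^ (D - i))) * (D.choose i : ZMod p) := by
        intro a _
        rw [eval_pow, eval_X]
        ring
      have hdeg : ((X : (ZMod p)[X]) ^ (D - i)).degree < (m : WithBot ℕ) := by
        rw [degree_X_pow]
        exact_mod_cast (by omega : D - i < m)
      rw [Finset.sum_congr rfl h2, ← Finset.sum_mul, moment _ hdeg, coeff_X_pow,
        if_neg (by omega), zero_mul]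
    · refine Finset.sum_eq_zero fun a _ => ?_
      rw [Nat.choose_eq_zero_of_lt hiD, Nat.cast_zero, mul_zero, mul_zero]
  have hQd : Q.coeff d = (D.choose d : ZMod p) := by
    rw [hQ, coeff_sub, Polynomial.finset_sum_coeff]
    have h1 : ∀ a ∈ A, (C (c a) * (X + C a) ^ D).coeff d
        = (c a * Polynomial.eval a (X ^ (m - 1))) * (D.choose d : ZMod p) := by
      intro a _
      rw [coeff_C_mul, coeff_X_add_C_pow, eval_pow, eval_X, show D - d = m - 1 by omega]
      ring
    have hdeg : ((X : (ZMod p)[X]) ^ (m - 1)).degree < (m : WithBot ℕ) := by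
      rw [degree_X_pow]
      exact_mod_cast (by omega : m - 1 < m)
    rw [Finset.sum_congr rfl h1, ← Finset.sum_mul, moment _ hdeg, coeff_X_pow,
      if_pos rfl, one_mul, coeff_one, if_neg (by omega), sub_zero]
  have hchoose : (D.choose d : ZMod p) ≠ 0 := by
    rw [Ne, ZMod.natCast_eq_zero_iff]
    intro hdvd'
    have h1 : D.choose d * d.factorial * (D - d).factorial = D.factorial :=
      Nat.choose_mul_factorial_mul_factorial (by omega : d ≤ D)
    have h2 : p ∣ D.factorial := h1 ▸ (hdvd'.mul_right _).mul_right _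
    have h3 := (Nat.Prime.dvd_factorial hp).mp h2
    omega
  have hQne : Q ≠ 0 := fun h => hchoose (by rw [← hQd, h, coeff_zero])
  have hQdeg : Q.natDegree ≤ d := natDegree_le_iff_coeff_eq_zero.mpr hcoeff
  have hpair : (B : Set (ZMod p)).Pairwise (Function.onFun IsCoprime fun b => (X - C b) ^ (rB b)) := by
    intro b hb b' hb' hne
    have h1 : IsCoprime (X - C b : (ZMod p)[X]) (X - C b') :=
      isCoprime_X_sub_C_of_isUnit_sub (isUnit_iff_ne_zero.mpr (sub_ne_zero.mpr hne))
    exact h1.pow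
  have hprod := Finset.prod_dvd_of_coprime hpair (fun b hb => hdvd b hb)
  have hdegprod : (∏ b ∈ B, (X - C b) ^ (rB b)).natDegree = ∑ b ∈ B, rB b := by
    rw [natDegree_prod_of_monic _ _ fun b _ => (monic_X_sub_C b).pow _]
    exact Finset.sum_congr rfl fun b _ => by rw [natDegree_pow, natDegree_X_sub_C, mul_one]
  have hsum_le : ∑ b ∈ B, rB b ≤ d := by
    rw [← hdegprod]
    exact (Polynomial.natDegree_le_of_dvd hprod hQne).trans hQdeg
  have hcount : ∑ b ∈ B, rB b + (B ∩ (-A)).card = m * B.card := by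
    have hfilter : B ∩ (-A) = B.filter (fun b => -b ∈ A) := by
      ext b
      simp only [Finset.mem_inter, Finset.mem_filter, Finset.mem_neg']
    rw [hfilter, Finset.card_filter, ← Finset.sum_add_distrib]
    have h1 : ∀ b ∈ B, rB b + (if -b ∈ A then 1 else 0) = m := by
      intro b _
      by_cases hbb : -b ∈ A <;> simp [hrB, hbb] <;> omega
    rw [Finset.sum_congr rfl h1, Finset.sum_const, smul_eq_mul, mul_comm]
  omega
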